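/- Bisection property of D̄_f: Let f : [0,∞) → [0,∞) be convex with f(1) = 0 and let M, L ∈ ℒ. Then D̄_f(L||M) = D̄_f(L_π||M_π). In particular, if M ∈ ℒ(π), then D̄_f(L||M) = D̄_f(L_π||M). -/
import Mathlib


open Finset

noncomputable section

variable {X : Type*} [Fintype X] [DecidableEq X]

/-- Build a matrix with prescribed off-diagonal entries and diagonal entries
chosen so that every row sums to zero. -/
def rowZero (F : X → X → ℝ) : X → X → ℝ :=
  fun x y => if x = y then -(∑ z ∈ Finset.univ.erase x, F x z) else F x y

/-- `L` is a Markov infinitesimal generator: nonnegative off-diagonal entries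
and zero row sums. -/
def IsGen (L : X → X → ℝ) : Prop :=
  (∀ x y, x ≠ y → 0 ≤ L x y) ∧ (∀ x, ∑ y, L x y = 0)

/-- `L` is a `π`-reversible Markov generator, i.e. `L ∈ ℒ(π)`. -/
def IsRev (π : X → ℝ) (L : X → X → ℝ) : Prop :=
  IsGen L ∧ ∀ x y, π x * L x y = π y * L y x

/-- `π` is a probability distribution with full support. -/
def IsProb (π : X → ℝ) : Prop := (∀ x, 0 < π x) ∧ ∑ x, π x = 1

/-- The `π`-dual `L_π` of `L`: off-diagonal entries `π(y)L(y,x)/π(x)`,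
diagonal entries make row sums zero. -/
def dual (π : X → ℝ) (L : X → X → ℝ) : X → X → ℝ :=
  rowZero (fun x y => π y * L y x / π x)

/-- The `f`-divergence between generators: `Df f π M L = D_f(M‖L)`.
(The convention `0·f(a/0) = 0` holds automatically since `a/0 = 0` and
the factor `L x y = 0` kills the term.) -/
def Df (f : ℝ → ℝ) (π : X → ℝ) (M L : X → X → ℝ) : ℝ :=
  ∑ x, π x * ∑ y ∈ Finset.univ.erase x, L x y * f (M x y / L x y)

/-- `D̄_f(L‖M) := D_f(L‖(L+M)/2)`. -/
def Dbar (f : ℝ → ℝ) (π : X → ℝ) (L M : X → X → ℝ) : ℝ :=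
  Df f π L (fun x y => (L x y + M x y) / 2)

/-- **Bisection property of `D̄_f`** (Theorem 3.2):
`D̄_f(L‖M) = D̄_f(L_π‖M_π)`; in particular, if `M ∈ ℒ(π)`, then
`D̄_f(L‖M) = D̄_f(L_π‖M)`. -/
theorem bisection_Dbar (π : X → ℝ) (hπ : IsProb π) (f : ℝ → ℝ)
    (hconv : ConvexOn ℝ (Set.Ici (0 : ℝ)) f) (hnonneg : ∀ t, 0 ≤ t → 0 ≤ f t)
    (hf1 : f 1 = 0)
    (L M : X → X → ℝ) (hL : IsGen L) (hM : IsGen M) :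
    Dbar f π L M = Dbar f π (dual π L) (dual π M) ∧
      (IsRev π M → Dbar f π L M = Dbar f π (dual π L) M) := by
  obtain ⟨hπpos, -⟩ := hπ
  have hπne : ∀ x, π x ≠ 0 := fun x => (hπpos x).ne'
  have hdual_off : ∀ (K : X → X → ℝ) (x y : X), y ≠ x →
      dual π K x y = π y * K y x / π x := by
    intro K x y hxy
    simp [dual, rowZero, (Ne.symm hxy)]
  set g : X → X → ℝ := fun x y =>
    ((L x y + M x y) / 2) * f (L x y / ((L x y + M x y) / 2)) with hg
  have key : ∀ h : X → X → ℝ,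
      (∑ x, ∑ y ∈ Finset.univ.erase x, h x y) =
        ∑ y, ∑ x ∈ Finset.univ.erase y, h x y := by
    intro h
    have e : ∀ (h : X → X → ℝ) (x : X),
        ∑ y ∈ Finset.univ.erase x, h x y = ∑ y, if y ≠ x then h x y else 0 := by
      intro h x
      rw [← Finset.filter_ne', Finset.sum_filter]
    calc (∑ x, ∑ y ∈ Finset.univ.erase x, h x y)
        = ∑ x, ∑ y, if y ≠ x then h x y else 0 := by
          exact Finset.sum_congr rfl fun x _ => e h x
      _ = ∑ y, ∑ x, if y ≠ x then h x y else 0 := Finset.sum_comm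
      _ = ∑ y, ∑ x ∈ Finset.univ.erase y, h x y := by
          refine Finset.sum_congr rfl fun y _ => ?_
          rw [e (fun y x => h x y) y]
          exact Finset.sum_congr rfl fun x _ => if_congr ne_comm rfl rfl
  have hRHS : Dbar f π (dual π L) (dual π M)
      = ∑ x, ∑ y ∈ Finset.univ.erase x, π y * g y x := by
    unfold Dbar Df
    refine Finset.sum_congr rfl fun x _ => ?_
    rw [Finset.mul_sum]
    refine Finset.sum_congr rfl fun y hy => ?_
    have hyx : y ≠ x := Finset.ne_of_mem_erase hy
    show π x * ((dual π L x y + dual π M x y) / 2 *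
        f (dual π L x y / ((dual π L x y + dual π M x y) / 2))) = π y * g y x
    rw [hdual_off L x y hyx, hdual_off M x y hyx]
    have hc : π y / π x ≠ 0 := div_ne_zero (hπne y) (hπne x)
    have e1 : π y * L y x / π x = (π y / π x) * L y x := by ring
    have e2 : (π y * L y x / π x + π y * M y x / π x) / 2
        = (π y / π x) * ((L y x + M y x) / 2) := by ring
    rw [e2, e1, mul_div_mul_left _ _ hc, hg]
    have cancel : π x * (π y / π x) = π y := by
      rw [mul_comm, div_mul_cancel₀ _ (hπne x)]
    rw [← mul_assoc, ← mul_assoc, cancel, mul_assoc]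
  have hLHS : Dbar f π L M = ∑ x, ∑ y ∈ Finset.univ.erase x, π x * g x y := by
    unfold Dbar Df
    exact Finset.sum_congr rfl fun x _ => Finset.mul_sum _ _ _
  have main : Dbar f π L M = Dbar f π (dual π L) (dual π M) := by
    rw [hLHS, hRHS, key (fun x y => π y * g y x)]
  refine ⟨main, fun hMrev => ?_⟩
  rw [main]
  unfold Dbar Df
  refine Finset.sum_congr rfl fun x _ => ?_
  congr 1
  refine Finset.sum_congr rfl fun y hy => ?_
  have hyx : y ≠ x := Finset.ne_of_mem_erase hy
  have hMxy : dual π M x y = M x y := by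
    rw [hdual_off M x y hyx, ← hMrev.2 x y]
    exact mul_div_cancel_left₀ _ (hπne x)
  show (dual π L x y + dual π M x y) / 2 *
      f (dual π L x y / ((dual π L x y + dual π M x y) / 2)) =
    (dual π L x y + M x y) / 2 * f (dual π L x y / ((dual π L x y + M x y) / 2))
  rw [hMxy]

end
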